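/- Let λ ∈ Γ_k and let integers k, l, r, s satisfy k > l ≥ 0, r > s ≥ 0, k ≥ r, l ≥ s, and (k,l) ≠ (r,s). Then equality holds in the generalized Newton–Maclaurin inequality ( (σ_k(λ)/C_n^k)/(σ_l(λ)/C_n^l) )^{1/(k−l)} ≤ ( (σ_r(λ)/C_n^r)/(σ_s(λ)/C_n^s) )^{1/(r−s)} if and only if λ_1 = λ_2 = ⋯ = λ_n > 0. -/

import Mathlib

open Finset

/-- The `k`-th elementary symmetric function of the entries of `lam` indexed by `s`. -/
noncomputable def esymmOn {n : ℕ} (s : Finset (Fin n)) (k : ℕ) (lam : Fin n → ℝ) : ℝ :=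
  ∑ S ∈ s.powersetCard k, ∏ i ∈ S, lam i

/-- `σ_k(λ)`. -/
noncomputable def esymm {n : ℕ} (k : ℕ) (lam : Fin n → ℝ) : ℝ :=
  esymmOn Finset.univ k lam

/-- `σ_k(λ|i)`: the `k`-th elementary symmetric function with the `i`-th entry deleted. -/
noncomputable def esymmDel {n : ℕ} (i : Fin n) (k : ℕ) (lam : Fin n → ℝ) : ℝ :=
  esymmOn (Finset.univ.erase i) k lam

/-- `σ_k(λ|ij)`: the `k`-th elementary symmetric function with the `i`-th and `j`-th
entries deleted. -/
noncomputable def esymmDel2 {n : ℕ} (i j : Fin n) (k : ℕ) (lam : Fin n → ℝ) : ℝ :=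
  esymmOn ((Finset.univ.erase i).erase j) k lam

/-- The Gårding cone `Γ_k`: all `λ` with `σ_i(λ) > 0` for `1 ≤ i ≤ k`. -/
def GardingCone (n k : ℕ) : Set (Fin n → ℝ) :=
  {lam | ∀ i : ℕ, 1 ≤ i → i ≤ k → 0 < esymm i lam}


section nmAux
open Polynomial


lemma deriv_step (p : ℝ[X]) (hd : Multiset.card p.roots = p.natDegree)
    (h3 : 3 ≤ p.natDegree) (h2 : 2 ≤ p.roots.toFinset.card) :
    (derivative p).natDegree = p.natDegree - 1 ∧
    Multiset.card (derivative p).roots = p.natDegree - 1 ∧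
    2 ≤ (derivative p).roots.toFinset.card := by
  have h1 : Multiset.card p.roots ≤ Multiset.card (derivative p).roots + 1 :=
    p.card_roots_le_derivative
  have hle : (derivative p).natDegree ≤ p.natDegree - 1 := p.natDegree_derivative_le
  have hge : p.natDegree - 1 ≤ Multiset.card (derivative p).roots := by omega
  have hcard' : Multiset.card (derivative p).roots ≤ (derivative p).natDegree :=
    card_roots' _
  refine ⟨by omega, by omega, ?_⟩
  have hdiff : p.roots.toFinset.card ≤
      ((derivative p).roots.toFinset \ p.roots.toFinset).card + 1 :=
    p.card_roots_toFinset_le_card_roots_derivative_diff_roots_succ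
  by_cases h3' : 3 ≤ p.roots.toFinset.card
  · calc 2 ≤ ((derivative p).roots.toFinset \ p.roots.toFinset).card := by omega
      _ ≤ (derivative p).roots.toFinset.card := Finset.card_le_card Finset.sdiff_subset
  · have hp : p ≠ 0 := by intro h; rw [h] at h3; simp at h3
    have hsum : ∑ a ∈ p.roots.toFinset, p.roots.count a = Multiset.card p.roots :=
      Multiset.toFinset_sum_count_eq _
    have hex : ∃ x ∈ p.roots.toFinset, 2 ≤ p.roots.count x := by
      by_contra hc
      push_neg at hc
      have hb : ∑ a ∈ p.roots.toFinset, p.roots.count a ≤ ∑ a ∈ p.roots.toFinset, 1 :=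
        Finset.sum_le_sum fun a ha => by have := hc a ha; omega
      simp only [Finset.sum_const, smul_eq_mul, mul_one] at hb; omega
    obtain ⟨x, hx, hmult⟩ := hex
    have hmult' : 2 ≤ p.rootMultiplicity x := by rwa [count_roots] at hmult
    have hdvd : (X - C x) ^ 2 ∣ p :=
      (pow_dvd_pow _ hmult').trans (p.pow_rootMultiplicity_dvd x)
    obtain ⟨g, hg⟩ := hdvd
    have hroot : (derivative p).IsRoot x := by
      rw [hg]
      simp [derivative_mul, derivative_pow, IsRoot]
    have hpne : derivative p ≠ 0 := by
      intro h; rw [h] at hge; simp at hge; omega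
    have hxmem : x ∈ (derivative p).roots.toFinset := by
      rw [Multiset.mem_toFinset, mem_roots hpne]; exact hroot
    obtain ⟨y, hy⟩ := Finset.card_pos.mp
      (show 0 < ((derivative p).roots.toFinset \ p.roots.toFinset).card by omega)
    have hymem : y ∈ (derivative p).roots.toFinset := Finset.sdiff_subset hy
    have hyx : y ≠ x := fun h => (Finset.mem_sdiff.mp hy).2 (h ▸ hx)
    have hsub : {y, x} ⊆ (derivative p).roots.toFinset := by
      intro z hz; simp only [Finset.mem_insert, Finset.mem_singleton] at hz
      rcases hz with h | h <;> simp [h, hymem, hxmem]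
    calc 2 = ({y, x} : Finset ℝ).card := by
          rw [Finset.card_insert_of_notMem (by simp [hyx]), Finset.card_singleton]
      _ ≤ _ := Finset.card_le_card hsub


lemma iter_deriv (p : ℝ[X]) (hd : Multiset.card p.roots = p.natDegree)
    (h2 : 2 ≤ p.roots.toFinset.card) :
    ∀ s, s + 2 ≤ p.natDegree →
      (derivative^[s] p).natDegree = p.natDegree - s ∧
      Multiset.card (derivative^[s] p).roots = p.natDegree - s ∧
      2 ≤ (derivative^[s] p).roots.toFinset.card := by
  intro s
  induction s with
  | zero => intro _; exact ⟨by simp, by simp [hd], h2⟩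
  | succ t ih =>
    intro hs
    obtain ⟨h1, h2', h3⟩ := ih (by omega)
    have hstep := deriv_step (derivative^[t] p) (by omega) (by omega) h3
    rw [Function.iterate_succ_apply']
    refine ⟨by omega, by omega, hstep.2.2⟩

lemma reverse_X_sub_C (μ : ℝ) : (X - C μ).reverse = 1 - C μ * X := by
  have h1 : (X - C μ).natDegree = 1 := natDegree_X_sub_C μ
  have h2 : (X : ℝ[X]) - C μ = C 1 * X ^ 1 + C (-μ) * X ^ 0 := by
    simp only [map_one, one_mul, pow_one, map_neg, pow_zero, mul_one]; ring
  rw [Polynomial.reverse, h1, h2, reflect_add, reflect_C_mul_X_pow, reflect_C_mul_X_pow,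
    revAt_le (by norm_num), revAt_le (by norm_num)]
  simp only [Nat.sub_self, pow_zero, mul_one, Nat.sub_zero, pow_one, map_one, map_neg]
  ring

lemma reverse_multiset_prod (s : Multiset ℝ[X]) :
    s.prod.reverse = (s.map Polynomial.reverse).prod := by
  induction s using Multiset.induction with
  | empty => show (1 : ℝ[X]).reverse = 1
             rw [← Polynomial.C_1, Polynomial.reverse_C]
  | cons a s ih => simp [Polynomial.reverse_mul_of_domain, ih]

lemma factor_eq (μ : ℝ) (hμ : μ ≠ 0) : 1 - C μ * X = C (-μ) * (X - C μ⁻¹) := by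
  rw [mul_sub, ← C_mul, neg_mul, mul_inv_cancel₀ hμ]
  simp only [map_neg, map_one]
  ring

lemma reverse_good (R : ℝ[X]) (hR : R ≠ 0) (hd : Multiset.card R.roots = R.natDegree)
    (h0 : R.coeff 0 ≠ 0) :
    R.reverse.natDegree = R.natDegree ∧ Multiset.card R.reverse.roots = R.natDegree ∧
    (∀ j, j ≤ R.natDegree → R.reverse.coeff j = R.coeff (R.natDegree - j)) ∧
    (2 ≤ R.roots.toFinset.card → 2 ≤ R.reverse.roots.toFinset.card) := by
  have hnz : ∀ μ ∈ R.roots, μ ≠ 0 := by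
    intro μ hμ h0'
    subst h0'
    have := (mem_roots hR).mp hμ
    rw [IsRoot, ← coeff_zero_eq_eval_zero] at this
    exact h0 this
  have hlead : R.leadingCoeff ≠ 0 := leadingCoeff_ne_zero.mpr hR
  have hsplit : R = C R.leadingCoeff * (R.roots.map fun a => X - C a).prod :=
    (splits_iff_card_roots.mpr hd).eq_prod_roots
  have hrev : R.reverse = C R.leadingCoeff * (R.roots.map fun μ => 1 - C μ * X).prod := by
    conv_lhs => rw [hsplit]
    rw [Polynomial.reverse_mul_of_domain, Polynomial.reverse_C, reverse_multiset_prod,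
      Multiset.map_map]
    exact congrArg (C R.leadingCoeff * ·)
      (congrArg Multiset.prod (Multiset.map_congr rfl fun μ _ => reverse_X_sub_C μ))
  have hrev2 : R.reverse.roots = R.roots.map Inv.inv := by
    rw [hrev, roots_C_mul _ hlead, roots_multiset_prod]
    · rw [Multiset.bind_map]
      have : ∀ μ ∈ R.roots, (1 - C μ * X).roots = {μ⁻¹} := by
        intro μ hμ
        rw [factor_eq μ (hnz μ hμ), roots_C_mul _ (neg_ne_zero.mpr (hnz μ hμ)), roots_X_sub_C]
      rw [Multiset.bind_congr this, Multiset.bind_singleton]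
    · intro hmem
      rw [Multiset.mem_map] at hmem
      obtain ⟨μ, hμ, hz⟩ := hmem
      have : (0 : ℝ[X]).coeff 0 = (1 - C μ * X).coeff 0 := by rw [hz]
      simp at this
  have hndeg : R.reverse.natDegree = R.natDegree := by
    rw [Polynomial.reverse_natDegree, natTrailingDegree_eq_zero.mpr (Or.inr h0), Nat.sub_zero]
  refine ⟨hndeg, by rw [hrev2, Multiset.card_map, hd], ?_, ?_⟩
  · intro j hj
    rw [coeff_reverse, revAt_le hj]
  · intro h2
    obtain ⟨x, hx, y, hy, hxy⟩ := Finset.one_lt_card.mp h2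
    rw [Multiset.mem_toFinset] at hx hy
    have hx' : x⁻¹ ∈ R.reverse.roots := by rw [hrev2]; exact Multiset.mem_map_of_mem _ hx
    have hy' : y⁻¹ ∈ R.reverse.roots := by rw [hrev2]; exact Multiset.mem_map_of_mem _ hy
    exact Finset.one_lt_card.mpr ⟨x⁻¹, Multiset.mem_toFinset.mpr hx', y⁻¹, Multiset.mem_toFinset.mpr hy',
      fun h => hxy (by rwa [inv_inj] at h)⟩

lemma quad_disc (q : ℝ[X]) (hdeg : q.natDegree = 2) (h2 : 2 ≤ q.roots.toFinset.card) :
    4 * (q.coeff 2 * q.coeff 0) < q.coeff 1 ^ 2 := by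
  obtain ⟨x, hx, y, hy, hxy⟩ := Finset.one_lt_card.mp h2
  have hq : q ≠ 0 := fun h => by simp [h] at hdeg
  rw [Multiset.mem_toFinset, mem_roots hq] at hx hy
  have e : ∀ z : ℝ, q.eval z = q.coeff 0 + q.coeff 1 * z + q.coeff 2 * z ^ 2 := by
    intro z
    rw [eval_eq_sum_range, hdeg]
    rw [Finset.sum_range_succ, Finset.sum_range_succ, Finset.sum_range_one]
    ring
  have hex : q.coeff 0 + q.coeff 1 * x + q.coeff 2 * x ^ 2 = 0 := by rw [← e]; exact hx
  have hey : q.coeff 0 + q.coeff 1 * y + q.coeff 2 * y ^ 2 = 0 := by rw [← e]; exact hy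
  have hA : q.coeff 2 ≠ 0 := by
    rw [show (2 : ℕ) = q.natDegree from hdeg.symm]
    exact leadingCoeff_ne_zero.mpr hq
  have hB0 : q.coeff 1 + q.coeff 2 * (x + y) = 0 := by
    have hsub : (x - y) * (q.coeff 1 + q.coeff 2 * (x + y)) = 0 := by
      linear_combination hex - hey
    rcases mul_eq_zero.mp hsub with h | h
    · exact absurd (sub_eq_zero.mp h) hxy
    · exact h
  have hB : q.coeff 1 = -q.coeff 2 * (x + y) := by linarith
  have hC : q.coeff 0 = q.coeff 2 * (x * y) := by linear_combination hex - x * hB0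
  rw [hB, hC]
  have hid : (-q.coeff 2 * (x + y)) ^ 2 - 4 * (q.coeff 2 * (q.coeff 2 * (x * y)))
      = (q.coeff 2) ^ 2 * (x - y) ^ 2 := by ring
  have hpos : 0 < (q.coeff 2) ^ 2 * (x - y) ^ 2 :=
    mul_pos (pow_two_pos_of_ne_zero hA) (pow_two_pos_of_ne_zero (sub_ne_zero.mpr hxy))
  linarith

theorem newton_strict {n : ℕ} (lam : Fin n → ℝ) (m : ℕ) (hm : 1 ≤ m) (hmn : m + 1 ≤ n)
    (hσ : esymm (m + 1) lam ≠ 0) (i0 j0 : Fin n) (hne0 : lam i0 ≠ lam j0) :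
    esymm (m - 1) lam * esymm (m + 1) lam * ((n.choose m : ℝ)) ^ 2
      < (esymm m lam) ^ 2 * ((n.choose (m - 1) : ℝ)) * ((n.choose (m + 1) : ℝ)) := by
  classical
  set Q : ℝ[X] := ∏ i : Fin n, (X + C (lam i)) with hQdef
  have hmono : ∀ i ∈ (univ : Finset (Fin n)), (X + C (lam i)).Monic := fun i _ => monic_X_add_C _
  have hQmonic : Q.Monic := monic_prod_of_monic _ _ hmono
  have hQne : Q ≠ 0 := hQmonic.ne_zero
  have hQdeg : Q.natDegree = n := by
    rw [hQdef, natDegree_prod_of_monic _ _ hmono]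
    simp [natDegree_X_add_C]
  have hQsplits : Splits Q :=
    Splits.prod (fun j _ => Splits.of_natDegree_le_one (le_of_eq (natDegree_X_add_C _)))
  have hQroots : Multiset.card Q.roots = Q.natDegree := (splits_iff_card_roots.mp hQsplits)
  have hmem : ∀ i : Fin n, -lam i ∈ Q.roots := by
    intro i
    rw [mem_roots hQne, IsRoot.def, hQdef, eval_prod]
    exact Finset.prod_eq_zero (Finset.mem_univ i) (by simp)
  have hQ2 : 2 ≤ Q.roots.toFinset.card :=
    Finset.one_lt_card.mpr ⟨_, Multiset.mem_toFinset.mpr (hmem i0), _,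
      Multiset.mem_toFinset.mpr (hmem j0), fun h => hne0 (neg_inj.mp h)⟩
  have hQc : ∀ j, j ≤ n → Q.coeff j = esymm (n - j) lam := by
    intro j hj
    rw [hQdef, Finset.prod_X_add_C_coeff univ lam (by simpa using hj)]
    simp [esymm, esymmOn, Finset.card_univ]
  -- first derivative chain
  set R : ℝ[X] := derivative^[n - m - 1] Q with hRdef
  obtain ⟨hRdeg, hRroots, hR2⟩ := iter_deriv Q hQroots hQ2 (n - m - 1) (by omega)
  have hRdeg' : R.natDegree = m + 1 := by rw [hRdef, hRdeg, hQdeg]; omega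
  have hRroots' : Multiset.card R.roots = R.natDegree := by rw [hRdef, hRroots, hRdeg]
  have hRcoeff : ∀ j, j ≤ m + 1 →
      R.coeff j = ((j + (n - m - 1)).descFactorial (n - m - 1) : ℝ) * esymm (m + 1 - j) lam := by
    intro j hj
    rw [hRdef, coeff_iterate_derivative, hQc (j + (n - m - 1)) (by omega), nsmul_eq_mul]
    have e : n - (j + (n - m - 1)) = m + 1 - j := by omega
    rw [e]
  have hR0 : R.coeff 0 ≠ 0 := by
    have h00 : R.coeff 0 = (((n - m - 1).descFactorial (n - m - 1) : ℕ) : ℝ)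
        * esymm (m + 1) lam := by
      have := hRcoeff 0 (by omega)
      simpa using this
    rw [h00]
    exact mul_ne_zero (Nat.cast_ne_zero.mpr
      (by rw [Nat.descFactorial_self]; exact Nat.factorial_ne_zero _)) hσ
  have hRne : R ≠ 0 := fun h => hR0 (by rw [h, coeff_zero])
  -- reverse
  obtain ⟨hTdeg, hTroots, hTcoeff, hT2⟩ := reverse_good R hRne hRroots' hR0
  set T : ℝ[X] := R.reverse with hTdef
  have hTdeg' : T.natDegree = m + 1 := by rw [hTdef, hTdeg, hRdeg']
  have hTroots' : Multiset.card T.roots = T.natDegree := by rw [hTdef, hTroots, hTdeg]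
  -- second derivative chain
  set U : ℝ[X] := derivative^[m - 1] T with hUdef
  obtain ⟨hUdeg, hUroots, hU2⟩ := iter_deriv T hTroots' (hT2 hR2) (m - 1) (by omega)
  have hUdeg' : U.natDegree = 2 := by rw [hUdef, hUdeg, hTdeg']; omega
  have hUcoeff : ∀ j, j ≤ 2 →
      U.coeff j = ((j + (m - 1)).descFactorial (m - 1) : ℝ) * R.coeff (2 - j) := by
    intro j hj
    rw [hUdef, coeff_iterate_derivative, nsmul_eq_mul, hTdef,
      hTcoeff (j + (m - 1)) (by rw [hRdeg']; omega)]
    have e : R.natDegree - (j + (m - 1)) = 2 - j := by rw [hRdeg']; omega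
    rw [e]
  -- concrete coefficients
  have hU0 : U.coeff 0 = ((m - 1).descFactorial (m - 1) : ℝ)
      * (((n - m + 1).descFactorial (n - m - 1) : ℝ) * esymm (m - 1) lam) := by
    rw [hUcoeff 0 (by omega), hRcoeff 2 (by omega)]
    norm_num
    have e1 : 2 + (n - m - 1) = n - m + 1 := by omega
    have e2 : m + 1 - 2 = m - 1 := by omega
    rw [e1, e2]
  have hU1 : U.coeff 1 = (m.descFactorial (m - 1) : ℝ)
      * (((n - m).descFactorial (n - m - 1) : ℝ) * esymm m lam) := by
    rw [hUcoeff 1 (by omega), hRcoeff 1 (by omega)]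
    have e1 : 1 + (m - 1) = m := by omega
    have e2 : 1 + (n - m - 1) = n - m := by omega
    have e3 : m + 1 - 1 = m := by omega
    rw [e1, e2, e3]
  have hU2c : U.coeff 2 = ((m + 1).descFactorial (m - 1) : ℝ)
      * (((n - m - 1).descFactorial (n - m - 1) : ℝ) * esymm (m + 1) lam) := by
    rw [hUcoeff 2 (by omega), hRcoeff 0 (by omega)]
    have e1 : 2 + (m - 1) = m + 1 := by omega
    rw [e1]
    norm_num
  have disc := quad_disc U hUdeg' hU2
  -- factorial identities
  have hb1 : m.descFactorial (m - 1) = m.factorial := by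
    have h := Nat.factorial_mul_descFactorial (show m - 1 ≤ m by omega)
    have e : m - (m - 1) = 1 := by omega
    rw [e] at h
    simpa [Nat.factorial_one] using h
  have hb2 : (n - m).descFactorial (n - m - 1) = (n - m).factorial := by
    have h := Nat.factorial_mul_descFactorial (show n - m - 1 ≤ n - m by omega)
    have e : n - m - (n - m - 1) = 1 := by omega
    rw [e] at h
    simpa [Nat.factorial_one] using h
  have ha1 : 2 * (m + 1).descFactorial (m - 1) = (m + 1).factorial := by
    have h := Nat.factorial_mul_descFactorial (show m - 1 ≤ m + 1 by omega)
    have e : m + 1 - (m - 1) = 2 := by omega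
    rw [e] at h
    simpa [show Nat.factorial 2 = 2 from rfl] using h
  have hc2 : 2 * (n - m + 1).descFactorial (n - m - 1) = (n - m + 1).factorial := by
    have h := Nat.factorial_mul_descFactorial (show n - m - 1 ≤ n - m + 1 by omega)
    have e : n - m + 1 - (n - m - 1) = 2 := by omega
    rw [e] at h
    simpa [show Nat.factorial 2 = 2 from rfl] using h
  have hc1' : (m - 1).descFactorial (m - 1) = (m - 1).factorial := Nat.descFactorial_self _
  have ha2 : (n - m - 1).descFactorial (n - m - 1) = (n - m - 1).factorial :=
    Nat.descFactorial_self _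
  have hch : n.choose m * m.factorial * (n - m).factorial = n.factorial :=
    Nat.choose_mul_factorial_mul_factorial (by omega)
  have hchm : n.choose (m - 1) * (m - 1).factorial * (n - m + 1).factorial = n.factorial := by
    have h := Nat.choose_mul_factorial_mul_factorial (show m - 1 ≤ n by omega)
    have e : n - (m - 1) = n - m + 1 := by omega
    rwa [e] at h
  have hchp : n.choose (m + 1) * (m + 1).factorial * (n - m - 1).factorial = n.factorial := by
    have h := Nat.choose_mul_factorial_mul_factorial (show m + 1 ≤ n by omega)
    have e : n - (m + 1) = n - m - 1 := by omega
    rwa [e] at h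
  -- real versions
  have E1 : 2 * ((m + 1).descFactorial (m - 1) : ℝ) = ((m + 1).factorial : ℝ) := by
    exact_mod_cast ha1
  have E2 : 2 * ((n - m + 1).descFactorial (n - m - 1) : ℝ) = ((n - m + 1).factorial : ℝ) := by
    exact_mod_cast hc2
  have E3 : (n.choose m : ℝ) * ((m.factorial : ℝ) * ((n - m).factorial : ℝ))
      = (n.factorial : ℝ) := by exact_mod_cast by rw [← hch]; ring
  have E4 : (n.choose (m - 1) : ℝ) * (((m - 1).factorial : ℝ) * ((n - m + 1).factorial : ℝ))
      = (n.factorial : ℝ) := by exact_mod_cast by rw [← hchm]; ring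
  have E5 : (n.choose (m + 1) : ℝ) * (((m + 1).factorial : ℝ) * ((n - m - 1).factorial : ℝ))
      = (n.factorial : ℝ) := by exact_mod_cast by rw [← hchp]; ring
  have E12 : 4 * (((m + 1).descFactorial (m - 1) : ℝ) * ((n - m + 1).descFactorial (n - m - 1) : ℝ))
      = ((m + 1).factorial : ℝ) * ((n - m + 1).factorial : ℝ) := by
    linear_combination ((n - m + 1).factorial : ℝ) * E1
      + 2 * ((m + 1).descFactorial (m - 1) : ℝ) * E2
  have key : 4 * (((m + 1).descFactorial (m - 1) : ℝ) * ((n - m - 1).factorial : ℝ)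
        * (((m - 1).factorial : ℝ) * ((n - m + 1).descFactorial (n - m - 1) : ℝ)))
        * ((n.choose (m - 1) : ℝ) * (n.choose (m + 1) : ℝ))
      = (n.factorial : ℝ) ^ 2 := by
    linear_combination (((n - m - 1).factorial : ℝ) * ((m - 1).factorial : ℝ)
        * ((n.choose (m - 1) : ℝ)) * ((n.choose (m + 1) : ℝ))) * E12
      + (((m + 1).factorial : ℝ) * ((n - m - 1).factorial : ℝ) * ((n.choose (m + 1) : ℝ))) * E4
      + ((n.factorial : ℝ)) * E5
  rw [hc1'] at hU0
  rw [hb1, hb2] at hU1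
  rw [ha2] at hU2c
  have hCMCP : (0 : ℝ) < ((n.choose (m - 1) : ℝ)) * ((n.choose (m + 1) : ℝ)) := by
    have h1 : 0 < n.choose (m - 1) := Nat.choose_pos (by omega)
    have h2 : 0 < n.choose (m + 1) := Nat.choose_pos (by omega)
    have h1' : (0 : ℝ) < (n.choose (m - 1) : ℝ) := by exact_mod_cast h1
    have h2' : (0 : ℝ) < (n.choose (m + 1) : ℝ) := by exact_mod_cast h2
    positivity
  have hd2 : 4 * (U.coeff 2 * U.coeff 0) * ((n.choose (m - 1) : ℝ) * (n.choose (m + 1) : ℝ))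
      < U.coeff 1 ^ 2 * ((n.choose (m - 1) : ℝ) * (n.choose (m + 1) : ℝ)) :=
    mul_lt_mul_of_pos_right disc hCMCP
  have e1 : 4 * (U.coeff 2 * U.coeff 0) * ((n.choose (m - 1) : ℝ) * (n.choose (m + 1) : ℝ))
      = esymm (m - 1) lam * esymm (m + 1) lam * ((n.factorial : ℝ)) ^ 2 := by
    rw [hU2c, hU0]
    linear_combination (esymm (m + 1) lam * esymm (m - 1) lam) * key
  have e2 : U.coeff 1 ^ 2 * ((n.choose (m - 1) : ℝ) * (n.choose (m + 1) : ℝ))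
      = (esymm m lam) ^ 2 * ((m.factorial : ℝ) * ((n - m).factorial : ℝ)) ^ 2
        * ((n.choose (m - 1) : ℝ) * (n.choose (m + 1) : ℝ)) := by
    rw [hU1]; ring
  rw [e1, e2] at hd2
  have hBfpos : (0 : ℝ) < (m.factorial : ℝ) * ((n - m).factorial : ℝ) := by
    have h1 : (0 : ℝ) < (m.factorial : ℝ) := by exact_mod_cast Nat.factorial_pos m
    have h2 : (0 : ℝ) < ((n - m).factorial : ℝ) := by exact_mod_cast Nat.factorial_pos (n - m)
    positivity
  have lhs_eq : ((m.factorial : ℝ) * ((n - m).factorial : ℝ)) ^ 2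
        * (esymm (m - 1) lam * esymm (m + 1) lam * ((n.choose m : ℝ)) ^ 2)
      = esymm (m - 1) lam * esymm (m + 1) lam * ((n.factorial : ℝ)) ^ 2 := by
    linear_combination (esymm (m - 1) lam * esymm (m + 1) lam
      * ((n.choose m : ℝ) * ((m.factorial : ℝ) * ((n - m).factorial : ℝ))
        + (n.factorial : ℝ))) * E3
  have final : ((m.factorial : ℝ) * ((n - m).factorial : ℝ)) ^ 2
        * (esymm (m - 1) lam * esymm (m + 1) lam * ((n.choose m : ℝ)) ^ 2)
      < ((m.factorial : ℝ) * ((n - m).factorial : ℝ)) ^ 2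
        * ((esymm m lam) ^ 2 * ((n.choose (m - 1) : ℝ)) * ((n.choose (m + 1) : ℝ))) := by
    rw [lhs_eq]
    calc esymm (m - 1) lam * esymm (m + 1) lam * ((n.factorial : ℝ)) ^ 2
        < (esymm m lam) ^ 2 * ((m.factorial : ℝ) * ((n - m).factorial : ℝ)) ^ 2
          * ((n.choose (m - 1) : ℝ) * (n.choose (m + 1) : ℝ)) := hd2
      _ = _ := by ring
  exact lt_of_mul_lt_mul_left final (by positivity)

end nmAux


lemma avg_step_right (x : ℕ → ℝ) (a b : ℕ) (hab : a < b)
    (h : ∀ j ∈ Finset.Ico a b, x b < x j) :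
    (∑ j ∈ Finset.Ico a (b + 1), x j) / ((b + 1 - a : ℕ) : ℝ)
      < (∑ j ∈ Finset.Ico a b, x j) / ((b - a : ℕ) : ℝ) := by
  have hcard : (Finset.Ico a b).card = b - a := Nat.card_Ico a b
  have hS : ((b - a : ℕ) : ℝ) * x b < ∑ j ∈ Finset.Ico a b, x j := by
    have := Finset.sum_lt_sum_of_nonempty (Finset.nonempty_Ico.mpr hab)
      (f := fun _ => x b) (g := x) h
    simpa [Finset.sum_const, hcard, nsmul_eq_mul] using this
  rw [Finset.sum_Ico_succ_top (le_of_lt hab)]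
  rw [div_lt_div_iff₀ (by exact_mod_cast Nat.pos_of_ne_zero (by omega))
    (by exact_mod_cast Nat.pos_of_ne_zero (by omega))]
  have e0 : b + 1 - a = (b - a) + 1 := by omega
  have e1 : ((b + 1 - a : ℕ) : ℝ) = ((b - a : ℕ) : ℝ) + 1 := by rw [e0]; push_cast; ring
  rw [e1]
  nlinarith [hS]

lemma avg_step_left (x : ℕ → ℝ) (a b : ℕ) (hab : a + 1 < b)
    (h : ∀ j ∈ Finset.Ico (a + 1) b, x j < x a) :
    (∑ j ∈ Finset.Ico (a + 1) b, x j) / ((b - (a + 1) : ℕ) : ℝ)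
      < (∑ j ∈ Finset.Ico a b, x j) / ((b - a : ℕ) : ℝ) := by
  have hcard : (Finset.Ico (a + 1) b).card = b - (a + 1) := Nat.card_Ico _ _
  have hS : (∑ j ∈ Finset.Ico (a + 1) b, x j) < ((b - (a + 1) : ℕ) : ℝ) * x a := by
    have := Finset.sum_lt_sum_of_nonempty (Finset.nonempty_Ico.mpr hab)
      (f := x) (g := fun _ => x a) h
    simpa [Finset.sum_const, hcard, nsmul_eq_mul] using this
  rw [Finset.sum_eq_sum_Ico_succ_bot (by omega : a < b)]
  rw [div_lt_div_iff₀ (by exact_mod_cast Nat.pos_of_ne_zero (by omega))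
    (by exact_mod_cast Nat.pos_of_ne_zero (by omega))]
  have e0 : b - a = (b - (a + 1)) + 1 := by omega
  have e1 : ((b - a : ℕ) : ℝ) = ((b - (a + 1) : ℕ) : ℝ) + 1 := by rw [e0]; push_cast; ring
  rw [e1]
  nlinarith [hS]

lemma avg_right (x : ℕ → ℝ) (a b c : ℕ) (hab : a < b) (hbc : b ≤ c)
    (hmono : ∀ i j, a ≤ i → i < j → j < c → x j < x i) :
    (∑ j ∈ Finset.Ico a c, x j) / ((c - a : ℕ) : ℝ)
      ≤ (∑ j ∈ Finset.Ico a b, x j) / ((b - a : ℕ) : ℝ) ∧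
    (b < c → (∑ j ∈ Finset.Ico a c, x j) / ((c - a : ℕ) : ℝ)
      < (∑ j ∈ Finset.Ico a b, x j) / ((b - a : ℕ) : ℝ)) := by
  revert hmono
  induction c, hbc using Nat.le_induction with
  | base => exact fun _ => ⟨le_rfl, fun h => absurd h (lt_irrefl b)⟩
  | succ c hbc ih =>
    intro hmono
    have hmono' : ∀ i j, a ≤ i → i < j → j < c → x j < x i :=
      fun i j h1 h2 h3 => hmono i j h1 h2 (by omega)
    obtain ⟨ih1, _⟩ := ih hmono'
    have hstep : (∑ j ∈ Finset.Ico a (c + 1), x j) / ((c + 1 - a : ℕ) : ℝ)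
        < (∑ j ∈ Finset.Ico a c, x j) / ((c - a : ℕ) : ℝ) :=
      avg_step_right x a c (by omega)
        (fun j hj => by
          have hj' := Finset.mem_Ico.mp hj
          exact hmono j c hj'.1 hj'.2 (by omega))
    exact ⟨(le_of_lt hstep).trans ih1, fun _ => lt_of_lt_of_le hstep ih1⟩

lemma avg_left (x : ℕ → ℝ) (s l k : ℕ) (hsl : s ≤ l) (hlk : l < k)
    (hmono : ∀ i j, s ≤ i → i < j → j < k → x j < x i) :
    (∑ j ∈ Finset.Ico l k, x j) / ((k - l : ℕ) : ℝ)
      ≤ (∑ j ∈ Finset.Ico s k, x j) / ((k - s : ℕ) : ℝ) ∧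
    (s < l → (∑ j ∈ Finset.Ico l k, x j) / ((k - l : ℕ) : ℝ)
      < (∑ j ∈ Finset.Ico s k, x j) / ((k - s : ℕ) : ℝ)) := by
  revert hlk
  induction l, hsl using Nat.le_induction with
  | base => exact fun _ => ⟨le_rfl, fun h => absurd h (lt_irrefl s)⟩
  | succ l hsl ih =>
    intro hlk
    obtain ⟨ih1, _⟩ := ih (by omega)
    have hstep : (∑ j ∈ Finset.Ico (l + 1) k, x j) / ((k - (l + 1) : ℕ) : ℝ)
        < (∑ j ∈ Finset.Ico l k, x j) / ((k - l : ℕ) : ℝ) :=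
      avg_step_left x l k hlk
        (fun j hj => by
          have hj' := Finset.mem_Ico.mp hj
          exact hmono l j hsl hj'.1 hj'.2)
    exact ⟨(le_of_lt hstep).trans ih1, fun _ => lt_of_lt_of_le hstep ih1⟩

lemma avg_windows (x : ℕ → ℝ) (s r l k : ℕ) (hsr : s < r) (hlk : l < k) (hsl : s ≤ l)
    (hrk : r ≤ k) (hor : l ≠ s ∨ k ≠ r)
    (hmono : ∀ i j, s ≤ i → i < j → j < k → x j < x i) :
    (∑ j ∈ Finset.Ico l k, x j) / ((k - l : ℕ) : ℝ)
      < (∑ j ∈ Finset.Ico s r, x j) / ((r - s : ℕ) : ℝ) := by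
  obtain ⟨h1, h1s⟩ := avg_right x s r k hsr hrk hmono
  obtain ⟨h2, h2s⟩ := avg_left x s l k hsl hlk hmono
  rcases Nat.lt_or_ge s l with h | h
  · exact lt_of_lt_of_le (h2s h) h1
  · have hls : l = s := by omega
    subst hls
    have hkr : r < k := by
      rcases hor with h' | h'
      · omega
      · omega
  -- k ≠ r and r ≤ k gives r < k
    exact lt_of_le_of_lt h2 (h1s hkr)

lemma esymm_zero_of_lt {n : ℕ} (lam : Fin n → ℝ) {j : ℕ} (h : n < j) : esymm j lam = 0 := by
  unfold esymm esymmOn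
  rw [Finset.powersetCard_eq_empty.mpr (by simpa using h)]
  simp

lemma esymm_zero_eq {n : ℕ} (lam : Fin n → ℝ) : esymm 0 lam = 1 := by
  unfold esymm esymmOn
  rw [Finset.powersetCard_zero]
  simp

lemma esymm_const {n : ℕ} {c : ℝ} (lam : Fin n → ℝ) (h : ∀ i, lam i = c) (j : ℕ) :
    esymm j lam = (n.choose j : ℝ) * c ^ j := by
  unfold esymm esymmOn
  have hc : ∀ S ∈ Finset.univ.powersetCard j, ∏ i ∈ S, lam i = c ^ j := by
    intro S hS
    obtain ⟨-, hcard⟩ := Finset.mem_powersetCard.mp hS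
    calc ∏ i ∈ S, lam i = ∏ _i ∈ S, c := Finset.prod_congr rfl (fun i _ => h i)
      _ = c ^ j := by rw [Finset.prod_const, hcard]
  rw [Finset.sum_congr rfl hc, Finset.sum_const, Finset.card_powersetCard, nsmul_eq_mul]
  simp [Finset.card_univ]


theorem generalized_newton_maclaurin_eq_iff (n k l r s : ℕ)
    (lam : Fin n → ℝ) (hGamma : lam ∈ GardingCone n k)
    (hkl : k > l) (hrs : r > s) (hkr : k ≥ r) (hls : l ≥ s) (hne : (k, l) ≠ (r, s)) :
    ((esymm k lam / (n.choose k : ℝ)) / (esymm l lam / (n.choose l : ℝ)))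
        ^ ((1 : ℝ) / ((k : ℝ) - (l : ℝ))) =
      ((esymm r lam / (n.choose r : ℝ)) / (esymm s lam / (n.choose s : ℝ)))
        ^ ((1 : ℝ) / ((r : ℝ) - (s : ℝ))) ↔
      ∃ c : ℝ, 0 < c ∧ ∀ i : Fin n, lam i = c := by
  have hk1 : 1 ≤ k := by omega
  have hkn : k ≤ n := by
    by_contra hkn
    exact absurd (hGamma k hk1 le_rfl) (by rw [esymm_zero_of_lt lam (by omega)]; simp)
  have hn1 : 1 ≤ n := le_trans hk1 hkn
  have hpos : ∀ j, j ≤ k → 0 < esymm j lam := by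
    intro j hj
    rcases Nat.eq_zero_or_pos j with h | h
    · subst h; rw [esymm_zero_eq]; norm_num
    · exact hGamma j h hj
  have hchoosepos : ∀ j, j ≤ n → (0 : ℝ) < (n.choose j : ℝ) := fun j hj => by
    exact_mod_cast Nat.choose_pos hj
  constructor
  · intro heq
    by_contra hnc
    by_cases hsplit : ∃ i j : Fin n, lam i ≠ lam j
    · obtain ⟨i0, j0, hne0⟩ := hsplit
      set p : ℕ → ℝ := fun j => esymm j lam / (n.choose j : ℝ) with hp
      have hppos : ∀ j, j ≤ k → 0 < p j := fun j hj =>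
        div_pos (hpos j hj) (hchoosepos j (le_trans hj hkn))
      set x : ℕ → ℝ := fun j => Real.log (p (j + 1)) - Real.log (p j) with hx
      have hadj : ∀ t, t + 1 < k → x (t + 1) < x t := by
        intro t ht
        have hN := newton_strict lam (t + 1) (by omega) (by omega)
          (ne_of_gt (hpos (t + 2) (by omega))) i0 j0 hne0
        simp only [Nat.add_sub_cancel] at hN
        have hpq : p t * p (t + 2) < p (t + 1) ^ 2 := by
          have c1 := hchoosepos t (by omega)
          have c2 := hchoosepos (t + 1) (by omega)
          have c3 := hchoosepos (t + 2) (by omega)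
          rw [hp]
          rw [div_mul_div_comm, div_pow, div_lt_div_iff₀ (by positivity) (by positivity)]
          nlinarith [hN]
        have l1 : Real.log (p t * p (t + 2)) < Real.log (p (t + 1) ^ 2) :=
          Real.log_lt_log (mul_pos (hppos t (by omega)) (hppos (t + 2) (by omega))) hpq
        rw [Real.log_mul (ne_of_gt (hppos t (by omega))) (ne_of_gt (hppos (t + 2) (by omega))),
          Real.log_pow] at l1
        show Real.log (p (t + 1 + 1)) - Real.log (p (t + 1))
          < Real.log (p (t + 1)) - Real.log (p t)
        have e2 : t + 1 + 1 = t + 2 := rfl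
        rw [e2]
        push_cast at l1
        linarith
      have hmono : ∀ i j, i < j → j < k → x j < x i := by
        intro i j
        induction j with
        | zero => omega
        | succ t ih =>
          intro hij hjk
          rcases Nat.lt_or_ge i t with h | h
          · exact lt_trans (hadj t hjk) (ih h (by omega))
          · have he : i = t := by omega
            subst he
            exact hadj i hjk
      have htel : ∀ a b : ℕ, a ≤ b →
          (∑ j ∈ Finset.Ico a b, x j) = Real.log (p b) - Real.log (p a) := by
        intro a b hab
        rw [Finset.sum_Ico_eq_sub _ hab]
        have h1 : ∀ m : ℕ, ∑ j ∈ Finset.range m, x j = Real.log (p m) - Real.log (p 0) :=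
          fun m => Finset.sum_range_sub (fun j => Real.log (p j)) m
        rw [h1, h1]; ring
      have hside : ∀ K L : ℕ, L < K → K ≤ k →
          Real.log (((esymm K lam / (n.choose K : ℝ)) / (esymm L lam / (n.choose L : ℝ)))
            ^ ((1 : ℝ) / ((K : ℝ) - (L : ℝ))))
          = (∑ j ∈ Finset.Ico L K, x j) / ((K - L : ℕ) : ℝ) := by
        intro K L hLK hKk
        have hbpos : 0 < p K / p L := div_pos (hppos K hKk) (hppos L (by omega))
        rw [show (esymm K lam / (n.choose K : ℝ)) / (esymm L lam / (n.choose L : ℝ))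
          = p K / p L from rfl]
        rw [Real.log_rpow hbpos,
          Real.log_div (ne_of_gt (hppos K hKk)) (ne_of_gt (hppos L (by omega))),
          htel L K (le_of_lt hLK)]
        have e0 : ((K - L : ℕ) : ℝ) = (K : ℝ) - (L : ℝ) := by
          push_cast [Nat.cast_sub (le_of_lt hLK)]; ring
        rw [e0]; ring
      have hor : l ≠ s ∨ k ≠ r := by
        rcases eq_or_ne k r with h1 | h1
        · left; intro h2; exact hne (by rw [h1, h2])
        · right; exact h1
      have hlt := avg_windows x s r l k hrs hkl hls hkr hor
        (fun i j _ hij hjk => hmono i j hij hjk)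
      have hcontra : Real.log (((esymm k lam / (n.choose k : ℝ))
            / (esymm l lam / (n.choose l : ℝ))) ^ ((1 : ℝ) / ((k : ℝ) - (l : ℝ))))
          < Real.log (((esymm r lam / (n.choose r : ℝ))
            / (esymm s lam / (n.choose s : ℝ))) ^ ((1 : ℝ) / ((r : ℝ) - (s : ℝ)))) := by
        rw [hside k l hkl le_rfl, hside r s hrs (le_trans hkr le_rfl)]
        exact hlt
      rw [heq] at hcontra
      exact lt_irrefl _ hcontra
    · push_neg at hsplit
      have i0 : Fin n := ⟨0, by omega⟩
      have hall : ∀ i, lam i = lam i0 := fun i => hsplit i i0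
      have hc : 0 < lam i0 := by
        have h1 := hGamma 1 le_rfl hk1
        rw [esymm_const lam hall 1] at h1
        have h2 : (0 : ℝ) < (n.choose 1 : ℝ) := hchoosepos 1 hn1
        nlinarith
      exact absurd ⟨lam i0, hc, hall⟩ hnc
  · rintro ⟨c, hc, hall⟩
    have hcomp : ∀ (K L : ℕ), L < K → K ≤ n →
        ((esymm K lam / (n.choose K : ℝ)) / (esymm L lam / (n.choose L : ℝ)))
          ^ ((1 : ℝ) / ((K : ℝ) - (L : ℝ))) = c := by
      intro K L hLK hKn
      have h1 : (n.choose K : ℝ) ≠ 0 := ne_of_gt (hchoosepos K hKn)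
      have h2 : (n.choose L : ℝ) ≠ 0 := ne_of_gt (hchoosepos L (by omega))
      rw [esymm_const lam hall K, esymm_const lam hall L,
        mul_div_cancel_left₀ _ h1, mul_div_cancel_left₀ _ h2,
        div_eq_mul_inv, ← pow_sub₀ c (ne_of_gt hc) (le_of_lt hLK),
        ← Real.rpow_natCast c (K - L), ← Real.rpow_mul (le_of_lt hc)]
      have e0 : ((K - L : ℕ) : ℝ) = (K : ℝ) - (L : ℝ) := by
        push_cast [Nat.cast_sub (le_of_lt hLK)]; ring
      have e1 : (K : ℝ) - (L : ℝ) ≠ 0 :=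
        ne_of_gt (sub_pos.mpr (by exact_mod_cast hLK))
      rw [e0, mul_one_div, div_self e1, Real.rpow_one]
    rw [hcomp k l hkl hkn, hcomp r s hrs (le_trans hkr hkn)]
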